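/- arXiv:quant-ph/0409113 — 3 statements merged into one kernel-verified Lean document; each statement's English description precedes it below -/
import Mathlib

section
/- (Gale–Ryser) There exists a 0-1 matrix with row sums given by the partition λ and column sums given by the partition μ if and only if λ is dominated by the conjugate partition μᵗ, i.e., Σ_{i≤k} λ_i ≤ Σ_{i≤k} μᵗ_i for all k, with equality of total sums |λ| = |μ|. -/
open Finset

lemma gr_count (n m : ℕ) : ((Finset.range n).filter (fun i => i < m)) = Finset.range (min m n) := by
  ext x; simp [lt_min_iff, and_comm]

lemma gr_dc (s t : Finset ℕ) (p : ℕ → ℕ → Prop) [∀ i j, Decidable (p i j)] :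
    ∑ i ∈ s, ((t.filter (p i)).card) = ∑ j ∈ t, ((s.filter (fun i => p i j)).card) := by
  simp only [Finset.card_filter]
  exact Finset.sum_comm

lemma gr_lower {f : ℕ → ℕ} (hf : Antitone f) (n a : ℕ) :
    (Finset.range n).filter (fun i => a ≤ f i)
      = Finset.range (((Finset.range n).filter (fun i => a ≤ f i)).card) := by
  set S := (Finset.range n).filter (fun i => a ≤ f i) with hS
  have hlow : ∀ i ∈ S, ∀ j ≤ i, j ∈ S := by
    intro i hi j hj
    simp only [hS, mem_filter, mem_range] at hi ⊢
    exact ⟨lt_of_le_of_lt hj hi.1, hi.2.trans (hf hj)⟩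
  ext i
  simp only [Finset.mem_range]
  constructor
  · intro hi
    have : Finset.range (i+1) ⊆ S := by
      intro j hj
      exact hlow i hi j (Nat.lt_succ_iff.mp (mem_range.mp hj))
    have := Finset.card_le_card this
    simpa using this
  · intro hi
    by_contra hiS
    have : S ⊆ Finset.range i := by
      intro j hj
      rw [mem_range]
      by_contra h
      exact hiS (hlow j hj i (Nat.le_of_not_lt h))
    have := Finset.card_le_card this
    simp at this
    omega

lemma gr_conj (r c N : ℕ) (lam mu : ℕ → ℕ) (hlam : Antitone lam) (hmu : Antitone mu)
    (hlamN : ∑ i ∈ Finset.range r, lam i = N) (hmuN : ∑ j ∈ Finset.range c, mu j = N)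
    (hmu0 : ∀ j, c ≤ j → mu j = 0) (hlamc : ∀ i, lam i ≤ c)
    (hdom : ∀ k, ∑ i ∈ Finset.range k, lam i ≤
        ∑ i ∈ Finset.range k, ((Finset.range c).filter fun j => i + 1 ≤ mu j).card) :
    ∀ k, ∑ j ∈ Finset.range k, mu j ≤
        ∑ j ∈ Finset.range k, ((Finset.range r).filter fun i => j + 1 ≤ lam i).card := by
  have main : ∀ k, k ≤ c → ∑ j ∈ Finset.range k, mu j ≤
      ∑ j ∈ Finset.range k, ((Finset.range r).filter fun i => j + 1 ≤ lam i).card := by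
    intro k hk
    -- A : prefix + tail of mu
    have hA : ∑ j ∈ Finset.range k, mu j + ∑ j ∈ Finset.Ico k c, mu j = N := by
      rw [← hmuN, Finset.range_eq_Ico, Finset.sum_Ico_consecutive mu (Nat.zero_le k) hk,
        ← Finset.range_eq_Ico]
    -- B : prefix of ν via double counting
    have hB : ∑ j ∈ Finset.range k, ((Finset.range r).filter fun i => j + 1 ≤ lam i).card
        = ∑ i ∈ Finset.range r, min (lam i) k := by
      rw [gr_dc (Finset.range k) (Finset.range r) (fun j i => j + 1 ≤ lam i)]
      apply Finset.sum_congr rfl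
      intro i _
      have : (Finset.range k).filter (fun j => j + 1 ≤ lam i)
          = (Finset.range k).filter (fun j => j < lam i) := by
        apply Finset.filter_congr
        intro j _
        omega
      rw [this, gr_count, Finset.card_range]
    have hB2 : ∑ i ∈ Finset.range r, min (lam i) k + ∑ i ∈ Finset.range r, (lam i - k) = N := by
      rw [← Finset.sum_add_distrib, ← hlamN]
      apply Finset.sum_congr rfl
      intro i _
      omega
    -- C : the key inequality
    set m := ((Finset.range r).filter (fun i => k + 1 ≤ lam i)).card with hmdef
    have hfm : (Finset.range r).filter (fun i => k + 1 ≤ lam i) = Finset.range m :=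
      gr_lower hlam r (k+1)
    have hmr : m ≤ r := by
      have := Finset.card_filter_le (Finset.range r) (fun i => k + 1 ≤ lam i)
      simpa only [Finset.card_range] using this
    have e1 : ∑ i ∈ Finset.range r, (lam i - k) = ∑ i ∈ Finset.range m, (lam i - k) := by
      symm
      apply Finset.sum_subset (Finset.range_subset_range.mpr hmr)
      intro i hi him
      have : i ∉ (Finset.range r).filter (fun i => k + 1 ≤ lam i) := by
        rw [hfm]; exact him
      simp only [mem_filter] at this
      have h2 : ¬ (k + 1 ≤ lam i) := fun h => this ⟨hi, h⟩
      omega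
    have e2 : ∀ i ∈ Finset.range m, k + 1 ≤ lam i := by
      intro i hi
      rw [← hfm] at hi
      exact (mem_filter.mp hi).2
    have e3 : ∑ i ∈ Finset.range m, (lam i - k) + m * k = ∑ i ∈ Finset.range m, lam i := by
      have hconst : ∑ _i ∈ Finset.range m, k = m * k := by
        simp [Finset.sum_const, mul_comm]
      rw [← hconst, ← Finset.sum_add_distrib]
      apply Finset.sum_congr rfl
      intro i hi
      have := e2 i hi
      omega
    have e4 := hdom m
    have e5 : ∑ i ∈ Finset.range m, ((Finset.range c).filter fun j => i + 1 ≤ mu j).card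
        ≤ ∑ i ∈ Finset.range m, (((Finset.range c).filter fun j => i + 1 ≤ mu j).card - k) + m * k := by
      have hconst : ∑ _i ∈ Finset.range m, k = m * k := by
        simp [Finset.sum_const, mul_comm]
      rw [← hconst, ← Finset.sum_add_distrib]
      apply Finset.sum_le_sum
      intro i _
      omega
    have e6 : ∀ i, ((Finset.range c).filter fun j => i + 1 ≤ mu j).card - k
        = ((Finset.Ico k c).filter fun j => i + 1 ≤ mu j).card := by
      intro i
      set s := ((Finset.range c).filter fun j => i + 1 ≤ mu j).card with hsdef
      have hfi : (Finset.range c).filter (fun j => i + 1 ≤ mu j) = Finset.range s :=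
        gr_lower hmu c (i+1)
      have hsc : s ≤ c := by
        have := Finset.card_filter_le (Finset.range c) (fun j => i + 1 ≤ mu j)
        simpa only [Finset.card_range] using this
      have : (Finset.Ico k c).filter (fun j => i + 1 ≤ mu j) = Finset.Ico k s := by
        ext j
        simp only [mem_filter, Finset.mem_Ico]
        constructor
        · rintro ⟨⟨hkj, hjc⟩, hp⟩
          refine ⟨hkj, ?_⟩
          have : j ∈ Finset.range s := by
            rw [← hfi]; exact mem_filter.mpr ⟨mem_range.mpr hjc, hp⟩
          exact mem_range.mp this
        · rintro ⟨hkj, hjs⟩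
          have : j ∈ (Finset.range c).filter (fun j => i + 1 ≤ mu j) := by
            rw [hfi]; exact mem_range.mpr hjs
          simp only [mem_filter, mem_range] at this
          exact ⟨⟨hkj, this.1⟩, this.2⟩
      rw [this, Nat.card_Ico]
    have e7 : ∑ i ∈ Finset.range m, ((Finset.Ico k c).filter fun j => i + 1 ≤ mu j).card
        ≤ ∑ i ∈ Finset.range (m + N), ((Finset.Ico k c).filter fun j => i + 1 ≤ mu j).card :=
      Finset.sum_le_sum_of_subset (Finset.range_subset_range.mpr (Nat.le_add_right m N))
    have e8 : ∑ i ∈ Finset.range (m + N), ((Finset.Ico k c).filter fun j => i + 1 ≤ mu j).card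
        = ∑ j ∈ Finset.Ico k c, mu j := by
      rw [gr_dc (Finset.range (m + N)) (Finset.Ico k c) (fun i j => i + 1 ≤ mu j)]
      apply Finset.sum_congr rfl
      intro j hj
      rw [Finset.mem_Ico] at hj
      have hjN : mu j ≤ N := by
        rw [← hmuN]
        exact Finset.single_le_sum (fun i _ => Nat.zero_le (mu i)) (mem_range.mpr hj.2)
      have : (Finset.range (m + N)).filter (fun i => i + 1 ≤ mu j)
          = (Finset.range (m + N)).filter (fun i => i < mu j) := by
        apply Finset.filter_congr
        intro i _
        omega
      rw [this, gr_count, Finset.card_range]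
      omega
    -- combine
    have key : ∑ i ∈ Finset.range r, (lam i - k) ≤ ∑ j ∈ Finset.Ico k c, mu j := by
      calc ∑ i ∈ Finset.range r, (lam i - k) = ∑ i ∈ Finset.range m, (lam i - k) := e1
        _ ≤ ∑ i ∈ Finset.range m, (((Finset.range c).filter fun j => i + 1 ≤ mu j).card - k) := by
            omega
        _ = ∑ i ∈ Finset.range m, ((Finset.Ico k c).filter fun j => i + 1 ≤ mu j).card :=
            Finset.sum_congr rfl (fun i _ => e6 i)
        _ ≤ ∑ i ∈ Finset.range (m + N), ((Finset.Ico k c).filter fun j => i + 1 ≤ mu j).card := e7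
        _ = ∑ j ∈ Finset.Ico k c, mu j := e8
    omega
  intro k
  have hmin : min k c ≤ c := min_le_right k c
  have step1 : ∑ j ∈ Finset.range k, mu j = ∑ j ∈ Finset.range (min k c), mu j := by
    symm
    apply Finset.sum_subset (Finset.range_subset_range.mpr (min_le_left k c))
    intro j hj hjm
    rw [mem_range] at hj
    simp only [mem_range] at hjm
    exact hmu0 j (by omega)
  have step2 : ∑ j ∈ Finset.range (min k c), ((Finset.range r).filter fun i => j + 1 ≤ lam i).card
      ≤ ∑ j ∈ Finset.range k, ((Finset.range r).filter fun i => j + 1 ≤ lam i).card :=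
    Finset.sum_le_sum_of_subset (Finset.range_subset_range.mpr (min_le_left k c))
  have := main (min k c) hmin
  omega


lemma gr_chain (r c : ℕ) (mu : ℕ → ℕ) (hmu : Antitone mu) :
    ∀ n (ν : ℕ → ℕ) (A : Fin r → Fin c → ℕ),
      (∑ k ∈ Finset.range (c+1), (∑ j ∈ Finset.range k, ν j - ∑ j ∈ Finset.range k, mu j)) = n →
      (∀ i j, A i j ≤ 1) →
      (∀ j : Fin c, ∑ i, A i j = ν (j : ℕ)) →
      (∀ k, ∑ j ∈ Finset.range k, mu j ≤ ∑ j ∈ Finset.range k, ν j) →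
      (∑ j ∈ Finset.range c, ν j = ∑ j ∈ Finset.range c, mu j) →
      ∃ A' : Fin r → Fin c → ℕ,
        (∀ i j, A' i j ≤ 1) ∧
        (∀ i, ∑ j, A' i j = ∑ j, A i j) ∧
        (∀ j : Fin c, ∑ i, A' i j = mu (j : ℕ)) := by
  intro n
  induction n using Nat.strong_induction_on with
  | _ n ih =>
  intro ν A hΦ hA1 hcol hdom htot
  by_cases hall : ∀ j, j < c → ν j = mu j
  · exact ⟨A, hA1, fun i => rfl, fun j => (hcol j).trans (hall j j.isLt)⟩
  push_neg at hall
  have hexa : ∃ j, j < c ∧ ν j ≠ mu j := hall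
  classical
  set a := Nat.find hexa with hadef
  obtain ⟨hac, hane⟩ : a < c ∧ ν a ≠ mu a := Nat.find_spec hexa
  have hlt_a : ∀ j, j < a → ν j = mu j := by
    intro j hj
    have := Nat.find_min hexa hj
    push_neg at this
    by_cases h : j < c
    · exact this h
    · exact False.elim (h (hj.trans hac))
  have hma : mu a < ν a := by
    have h1 := hdom (a+1)
    rw [Finset.sum_range_succ, Finset.sum_range_succ] at h1
    have h2 : ∑ j ∈ Finset.range a, mu j = ∑ j ∈ Finset.range a, ν j :=
      (Finset.sum_congr rfl fun j hj => (hlt_a j (mem_range.mp hj)).symm)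
    omega
  have hexb : ∃ j, j < c ∧ ν j < mu j := by
    by_contra hbn
    push_neg at hbn
    have : ∑ j ∈ Finset.range c, mu j < ∑ j ∈ Finset.range c, ν j := by
      apply Finset.sum_lt_sum
      · intro j hj; exact hbn j (mem_range.mp hj)
      · exact ⟨a, mem_range.mpr hac, hma⟩
    omega
  set b := Nat.find hexb with hbdef
  obtain ⟨hbc, hbv⟩ : b < c ∧ ν b < mu b := Nat.find_spec hexb
  have hab : a < b := by
    rcases lt_trichotomy a b with h | h | h
    · exact h
    · exfalso; rw [h] at hma; omega
    · exfalso
      have := hlt_a b h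
      omega
  have hmid : ∀ j, a < j → j < b → mu j ≤ ν j := by
    intro j h1 h2
    have := Nat.find_min hexb h2
    push_neg at this
    exact this (h2.trans hbc)
  have hνa1 : 1 ≤ ν a := by omega
  -- find the pivot row
  have hja : a < c := hac
  set ja : Fin c := ⟨a, hac⟩ with hjadef
  set jb : Fin c := ⟨b, hbc⟩ with hjbdef
  have hjab : ja ≠ jb := by
    intro h
    have : a = b := congrArg Fin.val h
    omega
  have hcollt : ∑ i, A i jb < ∑ i, A i ja := by
    rw [hcol, hcol]
    show ν b < ν a
    have : mu b ≤ mu a := hmu hab.le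
    omega
  obtain ⟨i, -, hilt⟩ := Finset.exists_lt_of_sum_lt hcollt
  have hia : A i ja = 1 := le_antisymm (hA1 i ja) (by omega)
  have hib : A i jb = 0 := by have := hA1 i jb; omega
  set newrow : Fin c → ℕ := Function.update (Function.update (A i) ja 0) jb 1 with hnrdef
  set A' : Fin r → Fin c → ℕ := Function.update A i newrow with hA'def
  set ν' : ℕ → ℕ := fun j => if j = a then ν a - 1 else if j = b then ν b + 1 else ν j with hν'def
  have hν'a : ν' a = ν a - 1 := by simp [hν'def]
  have hν'b : ν' b = ν b + 1 := by
    have hba : b ≠ a := by omega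
    simp [hν'def, hba]
  have hν'o : ∀ j, j ≠ a → j ≠ b → ν' j = ν j := by
    intro j h1 h2
    simp [hν'def, h1, h2]
  -- key prefix identity
  have hkey : ∀ k, (∑ j ∈ Finset.range k, ν' j) + (if a < k then 1 else 0)
      = (∑ j ∈ Finset.range k, ν j) + (if b < k then 1 else 0) := by
    intro k
    induction k with
    | zero => simp
    | succ k ihk =>
      rw [Finset.sum_range_succ, Finset.sum_range_succ]
      rcases eq_or_ne k a with hka | hka
      · subst hka
        rw [hν'a]
        split_ifs at ihk ⊢ <;> omega
      · rcases eq_or_ne k b with hkb | hkb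
        · subst hkb
          rw [hν'b]
          split_ifs at ihk ⊢ <;> omega
        · rw [hν'o k hka hkb]
          split_ifs at ihk ⊢ <;> omega
  have hdom' : ∀ k, ∑ j ∈ Finset.range k, mu j ≤ ∑ j ∈ Finset.range k, ν' j := by
    intro k
    have hk := hkey k
    rcases le_or_gt k a with h | h
    · have := hdom k
      split_ifs at hk <;> omega
    · rcases le_or_gt k b with h2 | h2
      · -- a < k ≤ b : need strict dominance at k
        have hsplit : ∀ f : ℕ → ℕ, ∑ j ∈ Finset.range k, f j
            = ∑ j ∈ Finset.range (a+1), f j + ∑ j ∈ Finset.Ico (a+1) k, f j := by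
          intro f
          rw [Finset.range_eq_Ico, ← Finset.sum_Ico_consecutive f (Nat.zero_le (a+1)) h,
            ← Finset.range_eq_Ico]
        have h3 : ∑ j ∈ Finset.Ico (a+1) k, mu j ≤ ∑ j ∈ Finset.Ico (a+1) k, ν j := by
          apply Finset.sum_le_sum
          intro j hj
          rw [Finset.mem_Ico] at hj
          exact hmid j hj.1 (lt_of_lt_of_le hj.2 h2)
        have h4 : ∑ j ∈ Finset.range (a+1), mu j + 1 ≤ ∑ j ∈ Finset.range (a+1), ν j := by
          rw [Finset.sum_range_succ, Finset.sum_range_succ]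
          have h2' : ∑ j ∈ Finset.range a, mu j = ∑ j ∈ Finset.range a, ν j :=
            (Finset.sum_congr rfl fun j hj => (hlt_a j (mem_range.mp hj)).symm)
          omega
        have h5 := hsplit mu
        have h6 := hsplit ν
        split_ifs at hk <;> omega
      · have := hdom k
        split_ifs at hk <;> omega
  have htot' : ∑ j ∈ Finset.range c, ν' j = ∑ j ∈ Finset.range c, mu j := by
    have hk := hkey c
    split_ifs at hk <;> omega
  -- measure decreases
  have hΦlt : (∑ k ∈ Finset.range (c+1),
      (∑ j ∈ Finset.range k, ν' j - ∑ j ∈ Finset.range k, mu j)) < n := by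
    rw [← hΦ]
    apply Finset.sum_lt_sum
    · intro k hk
      have h1 := hkey k
      have h2 := hdom' k
      split_ifs at h1 <;> omega
    · refine ⟨a+1, mem_range.mpr (by omega), ?_⟩
      have h1 := hkey (a+1)
      have h2 := hdom' (a+1)
      have h3 := hdom (a+1)
      split_ifs at h1 <;> omega
  -- properties of A'
  have hA'app : ∀ i' j', A' i' j' = if i' = i then newrow j' else A i' j' := by
    intro i' j'
    simp only [hA'def, Function.update_apply]
    split_ifs <;> rfl
  have hnr_jb : newrow jb = 1 := by simp [hnrdef]
  have hnr_ja : newrow ja = 0 := by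
    simp only [hnrdef]
    rw [Function.update_of_ne hjab, Function.update_self]
  have hnr_o : ∀ j, j ≠ ja → j ≠ jb → newrow j = A i j := by
    intro j h1 h2
    simp only [hnrdef]
    rw [Function.update_of_ne h2, Function.update_of_ne h1]
  have hA'1 : ∀ i' j', A' i' j' ≤ 1 := by
    intro i' j'
    rw [hA'app]
    split_ifs with h
    · rcases eq_or_ne j' ja with h1 | h1
      · rw [h1, hnr_ja]; omega
      · rcases eq_or_ne j' jb with h2 | h2
        · rw [h2, hnr_jb]
        · rw [hnr_o j' h1 h2]; exact hA1 i j'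
    · exact hA1 i' j'
  have hnrsum : ∑ j, newrow j = ∑ j, A i j := by
    have h1 : ∑ j, newrow j = 1 + ∑ j ∈ Finset.univ \ {jb}, (Function.update (A i) ja 0) j := by
      simp only [hnrdef]
      exact Finset.sum_update_of_mem (mem_univ jb) _ _
    have hja_mem : ja ∈ Finset.univ \ {jb} := by
      rw [Finset.mem_sdiff]
      exact ⟨mem_univ _, by simp [hjab]⟩
    have h2 : ∑ j ∈ Finset.univ \ {jb}, (Function.update (A i) ja 0) j
        = 0 + ∑ j ∈ (Finset.univ \ {jb}) \ {ja}, A i j := Finset.sum_update_of_mem hja_mem _ _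
    have h3 : ∑ j, A i j = A i jb + ∑ j ∈ Finset.univ \ {jb}, A i j := by
      rw [Finset.sum_eq_sum_sdiff_singleton_add (mem_univ jb)]
      omega
    have h4 : ∑ j ∈ Finset.univ \ {jb}, A i j
        = A i ja + ∑ j ∈ (Finset.univ \ {jb}) \ {ja}, A i j := by
      rw [Finset.sum_eq_sum_sdiff_singleton_add hja_mem]
      omega
    omega
  have hrow' : ∀ i', (∑ j, A' i' j) = ∑ j, A i' j := by
    intro i'
    rcases eq_or_ne i' i with h | h
    · subst h
      calc ∑ j, A' i' j = ∑ j, newrow j := by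
            apply Finset.sum_congr rfl
            intro j _
            rw [hA'app, if_pos rfl]
        _ = ∑ j, A i' j := hnrsum
    · apply Finset.sum_congr rfl
      intro j _
      rw [hA'app, if_neg h]
  have hcolsplit : ∀ (B : Fin r → Fin c → ℕ) (j : Fin c),
      ∑ i', B i' j = B i j + ∑ i' ∈ Finset.univ \ {i}, B i' j := by
    intro B j
    rw [Finset.sum_eq_sum_sdiff_singleton_add (mem_univ i)]
    omega
  have hcoldiff : ∀ j : Fin c, ∑ i' ∈ Finset.univ \ {i}, A' i' j
      = ∑ i' ∈ Finset.univ \ {i}, A i' j := by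
    intro j
    apply Finset.sum_congr rfl
    intro i' hi'
    rw [Finset.mem_sdiff] at hi'
    have : i' ≠ i := by simpa using hi'.2
    rw [hA'app, if_neg this]
  have hA'i : ∀ j, A' i j = newrow j := fun j => by rw [hA'app, if_pos rfl]
  have hcol' : ∀ j : Fin c, ∑ i', A' i' j = ν' (j : ℕ) := by
    intro j
    have e1 := hcolsplit A' j
    have e2 := hcolsplit A j
    rw [hcoldiff j] at e1
    rw [hcol j] at e2
    rcases eq_or_ne j ja with h1 | h1
    · subst h1
      rw [hA'i, hnr_ja] at e1
      have hval : ((ja : Fin c) : ℕ) = a := rfl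
      rw [hval] at e2 ⊢
      rw [hν'a]
      omega
    · rcases eq_or_ne j jb with h2 | h2
      · subst h2
        rw [hA'i, hnr_jb] at e1
        have hval : ((jb : Fin c) : ℕ) = b := rfl
        rw [hval] at e2 ⊢
        rw [hν'b]
        omega
      · rw [hA'i, hnr_o j h1 h2] at e1
        have hjv : ν' (j : ℕ) = ν (j : ℕ) := by
          apply hν'o
          · intro h; exact h1 (Fin.ext h)
          · intro h; exact h2 (Fin.ext h)
        rw [hjv]
        omega
  obtain ⟨A'', hA''1, hA''row, hA''col⟩ :=
    ih _ hΦlt ν' A' rfl hA'1 hcol' hdom' htot'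
  exact ⟨A'', hA''1, fun i' => (hA''row i').trans (hrow' i'), hA''col⟩



/-- Gale–Ryser: a 0-1 matrix with row sums `λ` and column sums `μ`
exists iff `λ` is dominated by the conjugate partition `μᵗ`. -/
theorem gale_ryser (N r c : ℕ) (lam mu : ℕ → ℕ)
    (hlam : Antitone lam) (hmu : Antitone mu)
    (hlam0 : ∀ i, r ≤ i → lam i = 0) (hmu0 : ∀ j, c ≤ j → mu j = 0)
    (hlamN : ∑ i ∈ Finset.range r, lam i = N)
    (hmuN : ∑ j ∈ Finset.range c, mu j = N) :
    (∃ A : Fin r → Fin c → ℕ,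
        (∀ i j, A i j ≤ 1) ∧
        (∀ i, ∑ j, A i j = lam (i : ℕ)) ∧
        (∀ j, ∑ i, A i j = mu (j : ℕ))) ↔
      ∀ k, ∑ i ∈ Finset.range k, lam i ≤
        ∑ i ∈ Finset.range k, ((Finset.range c).filter fun j => i + 1 ≤ mu j).card := by
  constructor
  · rintro ⟨A, hA1, hrow, hcolA⟩ k
    -- LHS = double sum over truncated matrix
    have s1 : ∑ i ∈ Finset.range k, lam i
        = ∑ i ∈ Finset.range r, (if i < k then lam i else 0) := by
      rw [Finset.sum_ite, Finset.sum_const_zero, add_zero]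
      have hfe : (Finset.range r).filter (fun i => i < k) = Finset.range (min k r) := by
        ext x; simp [lt_min_iff, and_comm]
      rw [hfe]
      symm
      apply Finset.sum_subset (Finset.range_subset_range.mpr (min_le_left k r))
      intro i hi him
      rw [mem_range] at hi
      simp only [mem_range] at him
      exact hlam0 i (by omega)
    have s2 : ∑ i ∈ Finset.range r, (if i < k then lam i else 0)
        = ∑ i : Fin r, (if (i : ℕ) < k then lam (i : ℕ) else 0) :=
      (Fin.sum_univ_eq_sum_range (fun i => if i < k then lam i else 0) r).symm
    have s3 : ∑ i : Fin r, (if (i : ℕ) < k then lam (i : ℕ) else 0)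
        = ∑ j : Fin c, ∑ i : Fin r, (if (i : ℕ) < k then A i j else 0) := by
      rw [Finset.sum_comm]
      apply Finset.sum_congr rfl
      intro i _
      by_cases h : (i : ℕ) < k
      · simp only [if_pos h]
        exact (hrow i).symm
      · simp [if_neg h]
    -- RHS = sum of min's
    have s4 : ∑ i ∈ Finset.range k, ((Finset.range c).filter fun j => i + 1 ≤ mu j).card
        = ∑ j ∈ Finset.range c, min (mu j) k := by
      rw [gr_dc (Finset.range k) (Finset.range c) (fun i j => i + 1 ≤ mu j)]
      apply Finset.sum_congr rfl
      intro j _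
      have : (Finset.range k).filter (fun i => i + 1 ≤ mu j)
          = (Finset.range k).filter (fun i => i < mu j) := by
        apply Finset.filter_congr
        intro i _
        omega
      rw [this, gr_count, Finset.card_range]
    have s5 : ∑ j ∈ Finset.range c, min (mu j) k = ∑ j : Fin c, min (mu (j : ℕ)) k :=
      (Fin.sum_univ_eq_sum_range (fun j => min (mu j) k) c).symm
    -- bound each column
    have s6 : ∀ j : Fin c, ∑ i : Fin r, (if (i : ℕ) < k then A i j else 0)
        ≤ min (mu (j : ℕ)) k := by
      intro j
      apply le_min
      · rw [← hcolA j]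
        apply Finset.sum_le_sum
        intro i _
        split_ifs <;> omega
      · calc ∑ i : Fin r, (if (i : ℕ) < k then A i j else 0)
            ≤ ∑ i : Fin r, (if (i : ℕ) < k then 1 else 0) := by
              apply Finset.sum_le_sum
              intro i _
              have := hA1 i j
              split_ifs <;> omega
          _ = ∑ i ∈ Finset.range r, (if i < k then 1 else 0) :=
              Fin.sum_univ_eq_sum_range (fun i => if i < k then 1 else 0) r
          _ = ((Finset.range r).filter (fun i => i < k)).card :=
              (Finset.card_filter _ _).symm
          _ ≤ k := by
              rw [gr_count, Finset.card_range]
              omega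
    calc ∑ i ∈ Finset.range k, lam i
        = ∑ j : Fin c, ∑ i : Fin r, (if (i : ℕ) < k then A i j else 0) := by
          rw [s1, s2, s3]
      _ ≤ ∑ j : Fin c, min (mu (j : ℕ)) k := Finset.sum_le_sum (fun j _ => s6 j)
      _ = ∑ i ∈ Finset.range k, ((Finset.range c).filter fun j => i + 1 ≤ mu j).card := by
          rw [s4, s5]
  · intro hdom
    classical
    have hlam0c : lam 0 ≤ c := by
      have h1 := hdom 1
      rw [Finset.sum_range_one, Finset.sum_range_one] at h1
      have h2 := Finset.card_filter_le (Finset.range c) (fun j => 0 + 1 ≤ mu j)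
      rw [Finset.card_range] at h2
      omega
    have hlamc : ∀ i, lam i ≤ c := fun i => (hlam (Nat.zero_le i)).trans hlam0c
    -- initial matrix : Young diagram of lam
    set A0 : Fin r → Fin c → ℕ := fun i j => if (j : ℕ) < lam (i : ℕ) then 1 else 0 with hA0def
    have hA01 : ∀ i j, A0 i j ≤ 1 := by
      intro i j
      simp only [hA0def]
      split_ifs <;> omega
    have hrow0 : ∀ i : Fin r, ∑ j, A0 i j = lam (i : ℕ) := by
      intro i
      calc ∑ j : Fin c, A0 i j
          = ∑ j ∈ Finset.range c, (if j < lam (i : ℕ) then 1 else 0) :=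
            Fin.sum_univ_eq_sum_range (fun j => if j < lam (i : ℕ) then 1 else 0) c
        _ = ((Finset.range c).filter (fun j => j < lam (i : ℕ))).card :=
            (Finset.card_filter _ _).symm
        _ = lam (i : ℕ) := by
            rw [gr_count, Finset.card_range]
            have := hlamc (i : ℕ)
            omega
    set ν : ℕ → ℕ := fun j => ((Finset.range r).filter fun i => j + 1 ≤ lam i).card with hνdef
    have hcol0 : ∀ j : Fin c, ∑ i, A0 i j = ν (j : ℕ) := by
      intro j
      calc ∑ i : Fin r, A0 i j
          = ∑ i ∈ Finset.range r, (if (j : ℕ) < lam i then 1 else 0) :=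
            Fin.sum_univ_eq_sum_range (fun i => if (j : ℕ) < lam i then 1 else 0) r
        _ = ((Finset.range r).filter (fun i => (j : ℕ) < lam i)).card :=
            (Finset.card_filter _ _).symm
        _ = ν (j : ℕ) := by
            simp only [hνdef]
            congr 1
    have htot0 : ∑ j ∈ Finset.range c, ν j = ∑ j ∈ Finset.range c, mu j := by
      simp only [hνdef]
      rw [← gr_dc (Finset.range r) (Finset.range c) (fun i j => j + 1 ≤ lam i)]
      rw [hmuN, ← hlamN]
      apply Finset.sum_congr rfl
      intro i _
      have : (Finset.range c).filter (fun j => j + 1 ≤ lam i)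
          = (Finset.range c).filter (fun j => j < lam i) := by
        apply Finset.filter_congr
        intro j _
        omega
      rw [this, gr_count, Finset.card_range]
      have := hlamc i
      omega
    have hdomν : ∀ k, ∑ j ∈ Finset.range k, mu j ≤ ∑ j ∈ Finset.range k, ν j :=
      gr_conj r c N lam mu hlam hmu hlamN hmuN hmu0 hlamc hdom
    obtain ⟨A', hA'1, hA'row, hA'col⟩ :=
      gr_chain r c mu hmu _ ν A0 rfl hA01 hcol0 hdomν htot0
    exact ⟨A', hA'1, fun i => (hA'row i).trans (hrow0 i), hA'col⟩
end

section
/- (Easy two-qubit necessity via trace inequality form) Let ρ be a density matrix on ℂ²⊗ℂ² with eigenvalues ν_1 ≥ ν_2 ≥ ν_3 ≥ ν_4 and reduced states ρ_A, ρ_B with minimal eigenvalues λ_A, λ_B. Then λ_A ≥ ν_3 + ν_4. -/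
open scoped ComplexOrder

/-- Partial trace over the second qubit. -/
noncomputable def ptraceB (ρ : Matrix (Fin 2 × Fin 2) (Fin 2 × Fin 2) ℂ) :
    Matrix (Fin 2) (Fin 2) ℂ :=
  Matrix.of fun i j => ∑ k, ρ (i, k) (j, k)

section BravyiAux
open Matrix

/-- Two tuples with the same multiset of values differ by a permutation. -/
lemma bravyi_exists_perm {n : ℕ} {α : Type*} [LinearOrder α] (f g : Fin n → α)
    (h : (Finset.univ.val.map f : Multiset α) = Finset.univ.val.map g) :
    ∃ σ : Equiv.Perm (Fin n), f = g ∘ σ := by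
  have h' : (List.ofFn f : Multiset α) = List.ofFn g := by
    simpa [Fin.univ_val_map] using h
  have hp : (List.ofFn (f ∘ Tuple.sort f)).Perm (List.ofFn (g ∘ Tuple.sort g)) := by
    refine ((Equiv.Perm.ofFn_comp_perm (Tuple.sort f) f).trans ?_).trans
      (Equiv.Perm.ofFn_comp_perm (Tuple.sort g) g).symm
    exact Quotient.exact h'
  have heq : f ∘ Tuple.sort f = g ∘ Tuple.sort g := by
    apply List.ofFn_injective
    exact List.Perm.eq_of_sortedLE
      ((Tuple.monotone_sort f).sortedLE_ofFn) ((Tuple.monotone_sort g).sortedLE_ofFn) hp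
  refine ⟨(Tuple.sort f).symm.trans (Tuple.sort g), ?_⟩
  funext l
  have := congrFun heq ((Tuple.sort f).symm l)
  simpa using this

/-- The key 4-variable arithmetic inequality. -/
lemma bravyi_arith (ν : Fin 4 → ℝ) (hν : Antitone ν) (p : Fin 4 → ℝ)
    (hp0 : ∀ j, 0 ≤ p j) (hp1 : ∀ j, p j ≤ 1) (hsum : ∑ j, p j = 2) :
    ν 2 + ν 3 ≤ ∑ j, ν j * p j := by
  have h01 : ν 1 ≤ ν 0 := hν (by decide)
  have h12 : ν 2 ≤ ν 1 := hν (by decide)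
  have h23 : ν 3 ≤ ν 2 := hν (by decide)
  rw [Fin.sum_univ_four] at hsum ⊢
  have k1 : 0 ≤ p 0 * (ν 0 - ν 2) := mul_nonneg (hp0 0) (by linarith)
  have k2 : 0 ≤ p 1 * (ν 1 - ν 2) := mul_nonneg (hp0 1) (by linarith)
  have k3 : 0 ≤ (1 - p 3) * (ν 2 - ν 3) := mul_nonneg (by linarith [hp1 3]) (by linarith)
  have k4 : ν 2 * (p 0 + p 1 + p 2 + p 3) = 2 * ν 2 := by rw [hsum]; ring
  nlinarith [k1, k2, k3, k4]

/-- Diagonal entries of a conjugated matrix as quadratic forms. -/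
lemma bravyi_diag_conj {m : Type*} [Fintype m] (U M : Matrix m m ℂ) (l : m) :
    (star U * M * U) l l = dotProduct (star (fun a => U a l)) (M *ᵥ fun a => U a l) := by
  simp only [Matrix.mul_apply, Matrix.mulVec, dotProduct, Matrix.star_apply,
    Finset.sum_mul, Finset.mul_sum, Pi.star_apply]
  rw [Finset.sum_comm]
  refine Finset.sum_congr rfl fun a _ => Finset.sum_congr rfl fun b _ => by ring

lemma bravyi_trace_diagonal_mul {m : Type*} [Fintype m] [DecidableEq m]
    (d : m → ℂ) (M : Matrix m m ℂ) :
    (Matrix.diagonal d * M).trace = ∑ l, d l * M l l := by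
  simp [Matrix.trace, Matrix.diag, Matrix.diagonal_mul]

variable (v : Fin 2 → ℂ)

/-- The projector `|v⟩⟨v| ⊗ I`. -/
noncomputable def bravyiP : Matrix (Fin 2 × Fin 2) (Fin 2 × Fin 2) ℂ :=
  Matrix.of fun a b => v a.1 * (starRingEnd ℂ) (v b.1) * (if a.2 = b.2 then 1 else 0)

/-- Isometry whose range is the projector. -/
noncomputable def bravyiW : Matrix (Fin 2) (Fin 2 × Fin 2) ℂ :=
  Matrix.of fun k b => (starRingEnd ℂ) (v b.1) * (if k = b.2 then 1 else 0)

lemma bravyiP_eq : bravyiP v = (bravyiW v)ᴴ * (bravyiW v) := by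
  ext a b
  simp only [bravyiP, bravyiW, Matrix.mul_apply, Matrix.conjTranspose_apply, Matrix.of_apply,
    star_mul', RingHomCompTriple.comp_apply, Complex.conj_conj]
  rw [Fin.sum_univ_two]
  rcases a with ⟨a1, a2⟩; rcases b with ⟨b1, b2⟩
  fin_cases a2 <;> fin_cases b2 <;> simp

lemma bravyiW_mul_conjTranspose (hv : dotProduct (star v) v = 1) :
    (bravyiW v) * (bravyiW v)ᴴ = 1 := by
  ext k m
  simp only [bravyiW, Matrix.mul_apply, Matrix.conjTranspose_apply, Matrix.of_apply, star_mul',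
    RingHomCompTriple.comp_apply, Complex.conj_conj, Fintype.sum_prod_type]
  simp only [dotProduct, Pi.star_apply, Complex.star_def] at hv
  fin_cases k <;> fin_cases m <;>
    simp [Fin.sum_univ_two, Matrix.one_apply] <;>
    rw [Fin.sum_univ_two] at hv <;> linear_combination hv

lemma bravyiP_posSemidef : (bravyiP v).PosSemidef := by
  rw [bravyiP_eq]; exact Matrix.posSemidef_conjTranspose_mul_self _

lemma bravyiP_idem (hv : dotProduct (star v) v = 1) :
    bravyiP v * bravyiP v = bravyiP v := by
  rw [bravyiP_eq, Matrix.mul_assoc, ← Matrix.mul_assoc (bravyiW v),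
    bravyiW_mul_conjTranspose v hv, Matrix.one_mul]

lemma bravyi_one_sub_P_posSemidef (hv : dotProduct (star v) v = 1) :
    (1 - bravyiP v).PosSemidef := by
  have hherm : (1 - bravyiP v)ᴴ = 1 - bravyiP v := by
    rw [Matrix.conjTranspose_sub, Matrix.conjTranspose_one, (bravyiP_posSemidef v).1]
  have h2 : (1 - bravyiP v) * (1 - bravyiP v) = 1 - bravyiP v := by
    rw [sub_mul, one_mul, mul_sub, mul_one, bravyiP_idem v hv, sub_self, sub_zero]
  have h3 : 1 - bravyiP v = (1 - bravyiP v)ᴴ * (1 - bravyiP v) := by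
    rw [hherm, h2]
  rw [h3]
  exact Matrix.posSemidef_conjTranspose_mul_self _

lemma bravyiP_trace (hv : dotProduct (star v) v = 1) : (bravyiP v).trace = 2 := by
  simp only [Matrix.trace, Matrix.diag, bravyiP, Matrix.of_apply, Fintype.sum_prod_type]
  simp only [dotProduct, Pi.star_apply, Complex.star_def] at hv
  simp [Fin.sum_univ_two]
  rw [Fin.sum_univ_two] at hv
  linear_combination (2:ℂ) * hv

lemma bravyi_trace_rhoP (ρ : Matrix (Fin 2 × Fin 2) (Fin 2 × Fin 2) ℂ) :
    (ρ * bravyiP v).trace = dotProduct (star v) (ptraceB ρ *ᵥ v) := by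
  simp only [Matrix.trace, Matrix.diag, Matrix.mul_apply, bravyiP, Matrix.of_apply,
    dotProduct, Matrix.mulVec, ptraceB, Pi.star_apply, Fintype.sum_prod_type,
    Complex.star_def, Finset.sum_mul, Finset.mul_sum]
  simp only [Fin.sum_univ_two, mul_ite, mul_one, mul_zero]
  simp only [show ((0:Fin 2) = 0) = True from by simp, show ((1:Fin 2) = 1) = True from by simp,
    show ((0:Fin 2) = 1) = False from by simp, show ((1:Fin 2) = 0) = False from by simp,
    if_true, if_false]
  ring

end BravyiAux

/-- Bravyi's easy two-qubit inequality: if `ρ` is a two-qubit density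
matrix with decreasingly ordered spectrum `ν₁ ≥ ν₂ ≥ ν₃ ≥ ν₄`, then the minimal
eigenvalue of `ρ_A = Tr_B ρ` is at least `ν₃ + ν₄`. -/
theorem bravyi_easy_inequality (ρ : Matrix (Fin 2 × Fin 2) (Fin 2 × Fin 2) ℂ)
    (hρ : ρ.PosSemidef) (htr : ρ.trace = 1)
    (hA : (ptraceB ρ).IsHermitian)
    (ν : Fin 4 → ℝ) (hν : Antitone ν)
    (hspec : Finset.univ.val.map hρ.isHermitian.eigenvalues = Finset.univ.val.map ν) :
    ∀ i, ν 2 + ν 3 ≤ hA.eigenvalues i := by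
  intro i
  classical
  set μ : (Fin 2 × Fin 2) → ℝ := hρ.isHermitian.eigenvalues with hμdef
  set v : Fin 2 → ℂ := ⇑(hA.eigenvectorBasis i) with hvdef
  -- the eigenvector has unit norm
  have hv1 : dotProduct (star v) v = 1 := by
    have h1 : ‖hA.eigenvectorBasis i‖ = 1 := hA.eigenvectorBasis.orthonormal.1 i
    have h2 : (inner ℂ (hA.eigenvectorBasis i) (hA.eigenvectorBasis i) : ℂ) = 1 := by
      rw [inner_self_eq_norm_sq_to_K, h1]; simp
    rw [EuclideanSpace.inner_eq_star_dotProduct, dotProduct_comm] at h2; exact h2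
  -- the eigenvalue as a complex trace
  have hAv : (ptraceB ρ).mulVec v = hA.eigenvalues i • v := hA.mulVec_eigenvectorBasis i
  have hT : (ρ * bravyiP v).trace = (hA.eigenvalues i : ℂ) := by
    rw [bravyi_trace_rhoP, hAv, dotProduct_smul, hv1]
    simp
  -- spectral decomposition of ρ
  set U : Matrix (Fin 2 × Fin 2) (Fin 2 × Fin 2) ℂ :=
    (hρ.isHermitian.eigenvectorUnitary : Matrix (Fin 2 × Fin 2) (Fin 2 × Fin 2) ℂ) with hUdef
  have hUU : star U * U = 1 := Matrix.mem_unitaryGroup_iff'.mp hρ.isHermitian.eigenvectorUnitary.2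
  have hUU' : U * star U = 1 := Matrix.mem_unitaryGroup_iff.mp hρ.isHermitian.eigenvectorUnitary.2
  have hspecρ : ρ = U * Matrix.diagonal (RCLike.ofReal ∘ μ) * star U :=
    hρ.isHermitian.spectral_theorem
  set c : (Fin 2 × Fin 2) → ℂ := fun l => (star U * bravyiP v * U) l l with hcdef
  have hc0 : ∀ l, 0 ≤ c l := fun l => by
    show 0 ≤ (star U * bravyiP v * U) l l
    rw [bravyi_diag_conj]; exact (bravyiP_posSemidef v).dotProduct_mulVec_nonneg _
  have hc1 : ∀ l, c l ≤ 1 := by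
    intro l
    have key : (1 : ℂ) - c l = (star U * (1 - bravyiP v) * U) l l := by
      rw [Matrix.mul_sub, Matrix.sub_mul, mul_one, hUU]
      rw [Matrix.sub_apply, Matrix.one_apply_eq]
    have h0 : 0 ≤ (1:ℂ) - c l := by
      rw [key, bravyi_diag_conj]
      exact (bravyi_one_sub_P_posSemidef v hv1).dotProduct_mulVec_nonneg _
    exact sub_nonneg.mp h0
  have hsumc : ∑ l, c l = 2 := by
    have h1 : ∑ l, c l = (star U * bravyiP v * U).trace := rfl
    rw [h1, Matrix.mul_assoc, Matrix.trace_mul_comm, Matrix.mul_assoc, hUU', Matrix.mul_one,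
      bravyiP_trace v hv1]
  -- the eigenvalue as weighted sum of eigenvalues of ρ
  have hmain : (hA.eigenvalues i : ℂ) = ∑ l, (μ l : ℂ) * c l := by
    rw [← hT]
    conv_lhs => rw [hspecρ]
    rw [Matrix.mul_assoc, Matrix.mul_assoc, Matrix.trace_mul_comm, Matrix.mul_assoc,
      bravyi_trace_diagonal_mul]
    rfl
  -- bounds on the real weights
  have hcim : ∀ l, (c l).im = 0 := fun l => ((Complex.le_def.mp (hc0 l)).2).symm
  have hcre0 : ∀ l, 0 ≤ (c l).re := fun l => by simpa using (Complex.le_def.mp (hc0 l)).1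
  have hcre1 : ∀ l, (c l).re ≤ 1 := fun l => by simpa using (Complex.le_def.mp (hc1 l)).1
  have hre : hA.eigenvalues i = ∑ l, μ l * (c l).re := by
    have := congrArg Complex.re hmain
    simpa [Complex.re_sum, Complex.mul_re, hcim] using this
  have hsumre : ∑ l, (c l).re = 2 := by
    have := congrArg Complex.re hsumc
    simpa [Complex.re_sum] using this
  -- extract the permutation
  have e0 : (Fin 2 × Fin 2) ≃ Fin 4 := finProdFinEquiv
  have hmult : (Finset.univ.val.map (μ ∘ e0.symm) : Multiset ℝ) = Finset.univ.val.map ν := by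
    rw [← hspec]
    have : (Finset.univ.val.map (⇑e0.symm) : Multiset (Fin 2 × Fin 2)) = Finset.univ.val := by
      have := congrArg Finset.val (Finset.map_univ_equiv e0.symm)
      simpa [Finset.map_val] using this
    calc (Finset.univ.val.map (μ ∘ e0.symm) : Multiset ℝ)
        = (Finset.univ.val.map (⇑e0.symm)).map μ := by rw [Multiset.map_map]
      _ = Finset.univ.val.map μ := by rw [this]
  obtain ⟨σ, hσ⟩ := bravyi_exists_perm (μ ∘ e0.symm) ν hmult
  -- reindex
  set E : Fin 4 ≃ (Fin 2 × Fin 2) := σ.symm.trans e0.symm with hEdef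
  have hμE : ∀ j, μ (E j) = ν j := by
    intro j
    have := congrFun hσ (σ.symm j)
    simpa [hEdef] using this
  set p : Fin 4 → ℝ := fun j => (c (E j)).re with hpdef
  have hfinal : hA.eigenvalues i = ∑ j, ν j * p j := by
    rw [hre, ← Equiv.sum_comp E (fun l => μ l * (c l).re)]
    exact Finset.sum_congr rfl fun j _ => by rw [hμE j]
  have hpsum : ∑ j, p j = 2 := by
    rw [hpdef, ← hsumre, ← Equiv.sum_comp E (fun l => (c l).re)]
  rw [hfinal]
  exact bravyi_arith ν hν p (fun j => hcre0 _) (fun j => hcre1 _) hpsum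
end

section
/- (Polygonal inequality for depth in two-row case via Murnaghan, specialization) If ψ is a pure state of an n-qubit system (unit vector in (ℂ²)^{⊗n}) with single-qubit reduced density matrices ρ^{(i)} having minimal eigenvalues λ_i, then for each i, λ_i ≤ Σ_{j ≠ i} λ_j. -/
open Finset Complex Matrix

local notation "conj'" => (starRingEnd ℂ)

/-- The reduced density matrix of the `i`-th qubit of an `n`-qubit pure state `ψ`. -/
noncomputable def qubitMargin (n : ℕ) (ψ : (Fin n → Fin 2) → ℂ) (i : Fin n) :
    Matrix (Fin 2) (Fin 2) ℂ :=
  Matrix.of fun a b =>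
    ∑ f ∈ Finset.univ.filter (fun f : Fin n → Fin 2 => f i = 0),
      ψ (Function.update f i a) * (starRingEnd ℂ) (ψ (Function.update f i b))

noncomputable def coeff {n : ℕ} (ψ : (Fin n → Fin 2) → ℂ)
    (V : Fin n → Fin 2 → Fin 2 → ℂ) (g : Fin n → Fin 2) : ℂ :=
  ∑ f, (∏ j, V j (g j) (f j)) * ψ f

lemma sum_update_fiber {n : ℕ} {M : Type*} [AddCommMonoid M] (j : Fin n)
    (F : (Fin n → Fin 2) → M) :
    ∑ f, F f = ∑ f ∈ Finset.univ.filter (fun f => f j = 0),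
      ∑ a, F (Function.update f j a) := by
  rw [← Finset.sum_product']
  refine Finset.sum_nbij' (fun f => (Function.update f j 0, f j))
      (fun p => Function.update p.1 j p.2) ?_ ?_ ?_ ?_ ?_
  · intro f _
    simp [Finset.mem_product, Function.update_self]
  · intro p _; exact Finset.mem_univ _
  · intro f _
    simp [Function.update_idem, Function.update_eq_self]
  · intro p hp
    simp only [Finset.mem_product, Finset.mem_filter, Finset.mem_univ, true_and] at hp
    ext k
    · simp only [Function.update_idem]
      rw [show (0 : Fin 2) = p.1 j from hp.1.symm, Function.update_eq_self]
    · simp [Function.update_self]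
  · intro f _
    simp [Function.update_idem, Function.update_eq_self]

lemma sum_split_at {n : ℕ} {M : Type*} [AddCommMonoid M] (i : Fin n)
    (F : (Fin n → Fin 2) → M) :
    ∑ f, F f = ∑ a : Fin 2,
      ∑ f ∈ Finset.univ.filter (fun f : Fin n → Fin 2 => f i = a), F f := by
  rw [Fin.sum_univ_two]
  rw [← Finset.sum_filter_add_sum_filter_not Finset.univ
    (fun f : Fin n → Fin 2 => f i = 0) F]
  congr 1
  refine Finset.sum_congr (Finset.filter_congr ?_) (fun _ _ => rfl)
  intro f _
  show ¬(f i = 0) ↔ f i = 1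
  have : ∀ y : Fin 2, ¬(y = 0) ↔ y = 1 := by decide
  exact this (f i)

lemma sum3_swap {M : Type*} [AddCommMonoid M] (G : Fin 2 → Fin 2 → Fin 2 → M) :
    ∑ x, ∑ a, ∑ b, G x a b = ∑ a, ∑ b, ∑ x, G x a b := by
  have h1 : ∀ x : Fin 2, ∑ a, ∑ b, G x a b = ∑ b, ∑ a, G x a b :=
    fun x => Finset.sum_comm
  rw [Finset.sum_comm]
  exact Finset.sum_congr rfl fun a _ => Finset.sum_comm

lemma onb_orth (v : OrthonormalBasis (Fin 2) ℂ (EuclideanSpace ℂ (Fin 2)))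
    (x y : Fin 2) :
    ∑ c, conj' (v x c) * v y c = if x = y then 1 else 0 := by
  have := v.orthonormal
  rw [orthonormal_iff_ite] at this
  simpa [PiLp.inner_apply, RCLike.inner_apply, mul_comm] using this x y

lemma onb_completeness (v : OrthonormalBasis (Fin 2) ℂ (EuclideanSpace ℂ (Fin 2)))
    (a b : Fin 2) :
    ∑ x, conj' (v x a) * v x b = if a = b then 1 else 0 := by
  set U : Matrix (Fin 2) (Fin 2) ℂ := Matrix.of fun x c => v x c with hU
  have h1 : U * U.conjTranspose = 1 := by
    ext x y
    simp only [Matrix.mul_apply, Matrix.conjTranspose_apply, hU, Matrix.of_apply]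
    calc ∑ c, v x c * conj' (v y c)
        = conj' (∑ c, conj' (v x c) * v y c) := by simp [map_sum, mul_comm]
      _ = if x = y then 1 else 0 := by
          rw [onb_orth v x y]; split <;> simp
      _ = (1 : Matrix (Fin 2) (Fin 2) ℂ) x y := by
          simp [Matrix.one_apply]
  have h2 : U.conjTranspose * U = 1 := mul_eq_one_comm.mp h1
  have := congrFun (congrFun h2 a) b
  simpa [Matrix.mul_apply, Matrix.conjTranspose_apply, hU, Matrix.one_apply] using this
lemma key {n : ℕ} (ψ : (Fin n → Fin 2) → ℂ) (V : Fin n → Fin 2 → Fin 2 → ℂ)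
    (j : Fin n) (x : Fin 2)
    (hcomp : ∀ k, k ≠ j → ∀ a b, ∑ y, V k y a * conj' (V k y b) = if a = b then 1 else 0) :
    ∑ g ∈ Finset.univ.filter (fun g => g j = x), (Complex.normSq (coeff ψ V g) : ℂ)
      = ∑ a, ∑ b, V j x a * conj' (V j x b) * qubitMargin n ψ j a b := by
  have expand : ∀ g, (Complex.normSq (coeff ψ V g) : ℂ)
      = ∑ f, ∑ f', (∏ k, (V k (g k) (f k) * conj' (V k (g k) (f' k))))
          * (ψ f * conj' (ψ f')) := by
    intro g
    rw [← Complex.mul_conj]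
    unfold coeff
    rw [map_sum, Finset.sum_mul_sum]
    refine Finset.sum_congr rfl fun f _ => Finset.sum_congr rfl fun f' _ => ?_
    rw [_root_.map_mul, map_prod, Finset.prod_mul_distrib]
    ring
  simp_rw [expand]
  rw [Finset.sum_comm]
  have swap2 : ∀ f : Fin n → Fin 2,
      ∑ g ∈ Finset.univ.filter (fun g : Fin n → Fin 2 => g j = x), ∑ f',
        (∏ k, (V k (g k) (f k) * conj' (V k (g k) (f' k)))) * (ψ f * conj' (ψ f'))
      = ∑ f', (∑ g ∈ Finset.univ.filter (fun g : Fin n → Fin 2 => g j = x),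
          ∏ k, (V k (g k) (f k) * conj' (V k (g k) (f' k)))) * (ψ f * conj' (ψ f')) := by
    intro f
    rw [Finset.sum_comm]
    exact Finset.sum_congr rfl fun f' _ => (Finset.sum_mul _ _ _).symm
  simp_rw [swap2]
  have hg : ∀ f f' : Fin n → Fin 2,
      ∑ g ∈ Finset.univ.filter (fun g : Fin n → Fin 2 => g j = x),
        ∏ k, (V k (g k) (f k) * conj' (V k (g k) (f' k)))
      = (V j x (f j) * conj' (V j x (f' j)))
          * ∏ k ∈ Finset.univ.erase j, (if f k = f' k then (1:ℂ) else 0) := by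
    intro f f'
    set F : Fin n → Fin 2 → ℂ := fun k y =>
      if k = j then (if y = x then V k y (f k) * conj' (V k y (f' k)) else 0)
      else V k y (f k) * conj' (V k y (f' k)) with hF
    have hpt : ∀ g : Fin n → Fin 2,
        (if g j = x then ∏ k, (V k (g k) (f k) * conj' (V k (g k) (f' k))) else 0)
        = ∏ k, F k (g k) := by
      intro g
      by_cases h : g j = x
      · rw [if_pos h]
        refine Finset.prod_congr rfl fun k _ => ?_
        simp only [hF]
        by_cases hk : k = j
        · subst hk; simp [h]
        · simp [hk]
      · rw [if_neg h]
        symm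
        refine Finset.prod_eq_zero (Finset.mem_univ j) ?_
        simp only [hF]
        simp [h]
    rw [Finset.sum_filter]
    simp_rw [hpt]
    rw [← Fintype.prod_sum F]
    rw [← Finset.mul_prod_erase Finset.univ _ (Finset.mem_univ j)]
    congr 1
    · simp only [hF, if_pos rfl]
      exact Fintype.sum_ite_eq' x (fun y => V j y (f j) * conj' (V j y (f' j)))
    · refine Finset.prod_congr rfl fun k hk => ?_
      have hkj : k ≠ j := (Finset.mem_erase.mp hk).1
      simp only [hF, if_neg hkj]
      exact hcomp k hkj (f k) (f' k)
  simp_rw [hg]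
  have collapse : ∀ (f : Fin n → Fin 2),
      ∑ f', ((V j x (f j) * conj' (V j x (f' j)))
          * ∏ k ∈ Finset.univ.erase j, (if f k = f' k then (1:ℂ) else 0))
          * (ψ f * conj' (ψ f'))
      = ∑ b, (V j x (f j) * conj' (V j x b)) * (ψ f * conj' (ψ (Function.update f j b))) := by
    intro f
    have hb : ∀ f' : Fin n → Fin 2,
        ((V j x (f j) * conj' (V j x (f' j)))
          * ∏ k ∈ Finset.univ.erase j, (if f k = f' k then (1:ℂ) else 0))
          * (ψ f * conj' (ψ f'))
        = if (∀ k ∈ Finset.univ.erase j, f k = f' k) then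
            (V j x (f j) * conj' (V j x (f' j))) * (ψ f * conj' (ψ f')) else 0 := by
      intro f'
      rw [Finset.prod_boole]
      split <;> ring
    simp_rw [hb]
    rw [← Finset.sum_filter]
    refine Finset.sum_nbij' (fun f' => f' j) (fun b => Function.update f j b) ?_ ?_ ?_ ?_ ?_
    · intros; exact Finset.mem_univ _
    · intro b _
      simp only [Finset.mem_filter, Finset.mem_univ, true_and, Finset.mem_erase]
      rintro k ⟨hk, -⟩
      exact (Function.update_of_ne hk _ _).symm
    · intro f' hf'
      simp only [Finset.mem_filter, Finset.mem_univ, true_and] at hf'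
      show Function.update f j (f' j) = f'
      funext k
      by_cases hk : k = j
      · subst hk; simp
      · rw [Function.update_of_ne hk]
        exact hf' k (Finset.mem_erase.mpr ⟨hk, Finset.mem_univ _⟩)
    · intro b _
      show Function.update f j b j = b
      simp
    · intro f' hf'
      simp only [Finset.mem_filter, Finset.mem_univ, true_and] at hf'
      have hupd : Function.update f j (f' j) = f' := by
        funext k
        by_cases hk : k = j
        · subst hk; simp
        · rw [Function.update_of_ne hk]
          exact hf' k (Finset.mem_erase.mpr ⟨hk, Finset.mem_univ _⟩)
      show _ = (V j x (f j) * conj' (V j x (f' j)))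
          * (ψ f * conj' (ψ (Function.update f j (f' j))))
      rw [hupd]
  simp_rw [collapse]
  have hswap : ∀ (G : Fin 2 → Fin 2 → (Fin n → Fin 2) → ℂ)
      (s : Finset (Fin n → Fin 2)),
      ∑ a, ∑ b, ∑ h ∈ s, G a b h = ∑ h ∈ s, ∑ a, ∑ b, G a b h := by
    intro G s
    have : ∀ a : Fin 2, ∑ b, ∑ h ∈ s, G a b h = ∑ h ∈ s, ∑ b, G a b h :=
      fun a => Finset.sum_comm
    simp_rw [this]
    exact Finset.sum_comm
  rw [sum_update_fiber j]
  simp only [qubitMargin, Matrix.of_apply]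
  simp_rw [Finset.mul_sum]
  rw [hswap]
  refine Finset.sum_congr rfl fun h _ => Finset.sum_congr rfl fun a _ =>
    Finset.sum_congr rfl fun b _ => ?_
  simp only [Function.update_self, Function.update_idem]
lemma parseval2 (v : Fin 2 → Fin 2 → ℂ)
    (hcomp : ∀ a b, ∑ x, conj' (v x a) * v x b = if a = b then 1 else 0)
    (ζ : Fin 2 → ℂ) :
    ∑ x, (Complex.normSq (∑ a, conj' (v x a) * ζ a) : ℂ)
      = ∑ a, (Complex.normSq (ζ a) : ℂ) := by
  have h1 : ∀ x, (Complex.normSq (∑ a, conj' (v x a) * ζ a) : ℂ)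
      = ∑ a, ∑ b, (conj' (v x a) * ζ a) * (v x b * conj' (ζ b)) := by
    intro x
    rw [← Complex.mul_conj, map_sum, Finset.sum_mul_sum]
    exact Finset.sum_congr rfl fun a _ => Finset.sum_congr rfl fun b _ => by
      rw [_root_.map_mul, Complex.conj_conj]
  simp_rw [h1]
  have hsw : ∀ G : Fin 2 → Fin 2 → Fin 2 → ℂ,
      ∑ x, ∑ a, ∑ b, G x a b = ∑ a, ∑ b, ∑ x, G x a b := by
    intro G
    have : ∀ x : Fin 2, ∑ a, ∑ b, G x a b = ∑ b, ∑ a, G x a b :=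
      fun x => Finset.sum_comm
    rw [Finset.sum_comm]
    refine Finset.sum_congr rfl fun a _ => Finset.sum_comm
  rw [hsw]
  have h2 : ∀ a b, ∑ x, (conj' (v x a) * ζ a) * (v x b * conj' (ζ b))
      = (ζ a * conj' (ζ b)) * (if a = b then 1 else 0) := by
    intro a b
    rw [← hcomp a b, Finset.mul_sum]
    exact Finset.sum_congr rfl fun x _ => by ring
  simp_rw [h2]
  simp_rw [mul_ite, mul_one, mul_zero]
  have h3 : ∀ a : Fin 2, ∑ b, (if a = b then ζ a * conj' (ζ b) else 0)
      = (Complex.normSq (ζ a) : ℂ) := by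
    intro a
    rw [Fintype.sum_ite_eq a (fun b => ζ a * conj' (ζ b))]
    rw [Complex.mul_conj]
  simp_rw [h3]

lemma quad_eval (ρ : Matrix (Fin 2) (Fin 2) ℂ) (hρ : ρ.IsHermitian) (ζ : Fin 2 → ℂ) :
    ∑ a, ∑ b, conj' (ζ a) * conj' (conj' (ζ b)) * ρ a b
      = ∑ x, (hρ.eigenvalues x : ℂ)
          * (Complex.normSq (∑ a, conj' ((hρ.eigenvectorBasis x) a) * ζ a) : ℂ) := by
  set v : Fin 2 → Fin 2 → ℂ := fun x a => (hρ.eigenvectorBasis x) a with hv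
  set η : Fin 2 → ℂ := fun x => ∑ a, conj' (v x a) * ζ a with hη
  have hcomp : ∀ a b, ∑ x, conj' (v x a) * v x b = if a = b then 1 else 0 :=
    fun a b => onb_completeness hρ.eigenvectorBasis a b
  have hζ : ∀ b, ζ b = ∑ x, v x b * η x := by
    intro b
    simp_rw [hη, Finset.mul_sum]
    rw [Finset.sum_comm]
    have : ∀ a, ∑ x, v x b * (conj' (v x a) * ζ a)
        = (if b = a then 1 else 0) * ζ a := by
      intro a
      have : ∑ x, conj' (v x b) * v x a = if b = a then 1 else 0 := hcomp b a
      calc ∑ x, v x b * (conj' (v x a) * ζ a)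
          = (∑ x, conj' (conj' (v x b) * v x a)) * ζ a := by
            rw [Finset.sum_mul]
            exact Finset.sum_congr rfl fun x _ => by
              rw [_root_.map_mul, Complex.conj_conj]; ring
        _ = (if b = a then 1 else 0) * ζ a := by
            rw [← map_sum, this]; split <;> simp
    simp_rw [this]
    simp [Fintype.sum_ite_eq b (fun a => ζ a)]
  have hmv : ∀ a', (ρ *ᵥ ζ) a' = ∑ x, η x * (hρ.eigenvalues x : ℂ) * v x a' := by
    intro a'
    unfold Matrix.mulVec dotProduct
    calc ∑ b, ρ a' b * ζ b
        = ∑ b, ρ a' b * ∑ x, v x b * η x := by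
          exact Finset.sum_congr rfl fun b _ => by rw [← hζ b]
      _ = ∑ b, ∑ x, η x * (ρ a' b * v x b) := by
          refine Finset.sum_congr rfl fun b _ => ?_
          rw [Finset.mul_sum]
          exact Finset.sum_congr rfl fun x _ => by ring
      _ = ∑ x, ∑ b, η x * (ρ a' b * v x b) := Finset.sum_comm
      _ = ∑ x, η x * (ρ *ᵥ (v x)) a' := by
          refine Finset.sum_congr rfl fun x _ => ?_
          simp only [Matrix.mulVec, dotProduct]
          rw [Finset.mul_sum]
      _ = ∑ x, η x * (hρ.eigenvalues x : ℂ) * v x a' := by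
          refine Finset.sum_congr rfl fun x _ => ?_
          have he := congrFun (hρ.mulVec_eigenvectorBasis x) a'
          have hvv : (ρ *ᵥ (v x)) a' = (hρ.eigenvalues x : ℂ) * v x a' := by
            rw [hv]
            simpa [Complex.real_smul] using he
          rw [hvv]
          ring
  calc ∑ a, ∑ b, conj' (ζ a) * conj' (conj' (ζ b)) * ρ a b
      = ∑ a, conj' (ζ a) * (ρ *ᵥ ζ) a := by
        refine Finset.sum_congr rfl fun a _ => ?_
        unfold Matrix.mulVec dotProduct
        rw [Finset.mul_sum]
        exact Finset.sum_congr rfl fun b _ => by rw [Complex.conj_conj]; ring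
    _ = ∑ a, ∑ x, (hρ.eigenvalues x : ℂ) * (η x * (conj' (ζ a) * v x a)) := by
        refine Finset.sum_congr rfl fun a _ => ?_
        rw [hmv a, Finset.mul_sum]
        exact Finset.sum_congr rfl fun x _ => by ring
    _ = ∑ x, ∑ a, (hρ.eigenvalues x : ℂ) * (η x * (conj' (ζ a) * v x a)) :=
        Finset.sum_comm
    _ = ∑ x, (hρ.eigenvalues x : ℂ) * (Complex.normSq (η x) : ℂ) := by
        refine Finset.sum_congr rfl fun x _ => ?_
        rw [← Finset.mul_sum, ← Finset.mul_sum]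
        congr 1
        rw [← Complex.mul_conj]
        congr 1
        rw [hη, map_sum]
        exact Finset.sum_congr rfl fun a _ => by rw [_root_.map_mul, Complex.conj_conj]; ring
    _ = _ := rfl

/-- polygonal inequalities: for a pure `n`-qubit state, the minimal
eigenvalues `λᵢ` of the single-qubit margins satisfy `λᵢ ≤ Σ_{j ≠ i} λⱼ`. -/
theorem polygonal_inequalities (n : ℕ) (ψ : (Fin n → Fin 2) → ℂ)
    (hunit : ∑ f, Complex.normSq (ψ f) = 1)
    (hherm : ∀ i, (qubitMargin n ψ i).IsHermitian)
    (lam : Fin n → ℝ)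
    (hlam : ∀ i, lam i = min ((hherm i).eigenvalues 0) ((hherm i).eigenvalues 1)) :
    ∀ i, lam i ≤ ∑ j ∈ Finset.univ.erase i, lam j := by
  intro i
  classical
  set W : Fin n → Fin 2 → Fin 2 → ℂ :=
    fun j x a => conj' ((hherm j).eigenvectorBasis x a) with hW
  have hcompW : ∀ (k : Fin n) (a b : Fin 2),
      ∑ y, W k y a * conj' (W k y b) = if a = b then 1 else 0 := by
    intro k a b
    calc ∑ y, W k y a * conj' (W k y b)
        = ∑ y, conj' ((hherm k).eigenvectorBasis y a)
            * (hherm k).eigenvectorBasis y b := by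
          refine Finset.sum_congr rfl fun y _ => ?_
          simp only [hW, Complex.conj_conj]
      _ = _ := onb_completeness (hherm k).eigenvectorBasis a b
  -- the filtered sums of |coeff|² compute the eigenvalues
  have hS : ∀ (j : Fin n) (x : Fin 2),
      ∑ g ∈ Finset.univ.filter (fun g : Fin n → Fin 2 => g j = x),
        Complex.normSq (coeff ψ W g) = (hherm j).eigenvalues x := by
    intro j x
    have hC : (↑(∑ g ∈ Finset.univ.filter (fun g : Fin n → Fin 2 => g j = x),
        Complex.normSq (coeff ψ W g)) : ℂ) = ((hherm j).eigenvalues x : ℂ) := by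
      calc (↑(∑ g ∈ Finset.univ.filter (fun g : Fin n → Fin 2 => g j = x),
          Complex.normSq (coeff ψ W g)) : ℂ)
          = ∑ g ∈ Finset.univ.filter (fun g : Fin n → Fin 2 => g j = x),
              (Complex.normSq (coeff ψ W g) : ℂ) := by push_cast; rfl
        _ = ∑ a, ∑ b, W j x a * conj' (W j x b) * qubitMargin n ψ j a b :=
            key ψ W j x (fun k _ a b => hcompW k a b)
        _ = ∑ a, ∑ b, conj' ((hherm j).eigenvectorBasis x a)
              * conj' (conj' ((hherm j).eigenvectorBasis x b)) * qubitMargin n ψ j a b := by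
            refine Finset.sum_congr rfl fun a _ => Finset.sum_congr rfl fun b _ => ?_
            simp only [hW, Complex.conj_conj]
        _ = ∑ x', ((hherm j).eigenvalues x' : ℂ)
              * (Complex.normSq (∑ a, conj' ((hherm j).eigenvectorBasis x' a)
                  * ((hherm j).eigenvectorBasis x) a) : ℂ) :=
            quad_eval _ (hherm j) (fun a => (hherm j).eigenvectorBasis x a)
        _ = ((hherm j).eigenvalues x : ℂ) := by
            have hd : ∀ x' : Fin 2,
                (Complex.normSq (∑ a, conj' ((hherm j).eigenvectorBasis x' a)
                  * ((hherm j).eigenvectorBasis x) a) : ℂ) = if x' = x then 1 else 0 := by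
              intro x'
              rw [onb_orth (hherm j).eigenvectorBasis x' x]
              split <;> simp
            simp_rw [hd]
            simp [mul_ite, mul_one, mul_zero]
    exact_mod_cast hC
  -- trace = 1
  have htr : ∑ a, qubitMargin n ψ i a a = (1 : ℂ) := by
    calc ∑ a, qubitMargin n ψ i a a
        = ∑ a, ∑ f ∈ Finset.univ.filter (fun f : Fin n → Fin 2 => f i = 0),
            ψ (Function.update f i a) * conj' (ψ (Function.update f i a)) := rfl
      _ = ∑ f ∈ Finset.univ.filter (fun f : Fin n → Fin 2 => f i = 0),
            ∑ a, ψ (Function.update f i a) * conj' (ψ (Function.update f i a)) :=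
          Finset.sum_comm
      _ = ∑ f, ψ f * conj' (ψ f) :=
          (sum_update_fiber i (fun f => ψ f * conj' (ψ f))).symm
      _ = ∑ f, (Complex.normSq (ψ f) : ℂ) :=
          Finset.sum_congr rfl fun f _ => Complex.mul_conj (ψ f)
      _ = ((∑ f, Complex.normSq (ψ f) : ℝ) : ℂ) := by push_cast; rfl
      _ = 1 := by rw [hunit]; norm_num
  have hsum_ev : (hherm i).eigenvalues 0 + (hherm i).eigenvalues 1 = 1 := by
    have hC : (∑ x, ((hherm i).eigenvalues x : ℂ)) = 1 := by
      calc ∑ x, ((hherm i).eigenvalues x : ℂ)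
          = ∑ x, ∑ a, ∑ b, W i x a * conj' (W i x b) * qubitMargin n ψ i a b := by
            refine Finset.sum_congr rfl fun x _ => ?_
            rw [← hS i x]
            calc (↑(∑ g ∈ Finset.univ.filter (fun g : Fin n → Fin 2 => g i = x),
                Complex.normSq (coeff ψ W g)) : ℂ)
                = ∑ g ∈ Finset.univ.filter (fun g : Fin n → Fin 2 => g i = x),
                  (Complex.normSq (coeff ψ W g) : ℂ) := by push_cast; rfl
              _ = _ := key ψ W i x (fun k _ a b => hcompW k a b)
        _ = ∑ a, ∑ b, ∑ x, W i x a * conj' (W i x b) * qubitMargin n ψ i a b :=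
            sum3_swap _
        _ = ∑ a, ∑ b, (if a = b then (1:ℂ) else 0) * qubitMargin n ψ i a b := by
            refine Finset.sum_congr rfl fun a _ => Finset.sum_congr rfl fun b _ => ?_
            rw [← Finset.sum_mul, hcompW i a b]
        _ = ∑ a, qubitMargin n ψ i a a := by
            refine Finset.sum_congr rfl fun a _ => ?_
            simp [ite_mul, Fintype.sum_ite_eq a (fun b => qubitMargin n ψ i a b)]
        _ = 1 := htr
    rw [Fin.sum_univ_two] at hC
    exact_mod_cast hC
  -- good and bad indices
  have hfin2 : ∀ y : Fin 2, y = 0 ∨ y = 1 := by decide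
  set good : Fin n → Fin 2 := fun j =>
    if (hherm j).eigenvalues 0 ≤ (hherm j).eigenvalues 1 then 1 else 0 with hgood
  set bad : Fin n → Fin 2 := fun j =>
    if (hherm j).eigenvalues 0 ≤ (hherm j).eigenvalues 1 then 0 else 1 with hbad
  have hlam_bad : ∀ j, lam j = (hherm j).eigenvalues (bad j) := by
    intro j
    rw [hlam j]
    by_cases h : (hherm j).eigenvalues 0 ≤ (hherm j).eigenvalues 1
    · simp only [hbad, if_pos h]; exact min_eq_left h
    · simp only [hbad, if_neg h]; exact min_eq_right (le_of_not_ge h)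
  have hgb : ∀ (j : Fin n) (y : Fin 2), y ≠ good j → y = bad j := by
    intro j y hy
    by_cases h : (hherm j).eigenvalues 0 ≤ (hherm j).eigenvalues 1
    · simp only [hgood, if_pos h] at hy
      simp only [hbad, if_pos h]
      rcases hfin2 y with rfl | rfl
      · rfl
      · exact absurd rfl hy
    · simp only [hgood, if_neg h] at hy
      simp only [hbad, if_neg h]
      rcases hfin2 y with rfl | rfl
      · exact absurd rfl hy
      · rfl
  have hle_good : ∀ (j : Fin n) (x : Fin 2),
      (hherm j).eigenvalues x ≤ (hherm j).eigenvalues (good j) := by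
    intro j x
    by_cases h : (hherm j).eigenvalues 0 ≤ (hherm j).eigenvalues 1
    · simp only [hgood, if_pos h]
      rcases hfin2 x with rfl | rfl
      · exact h
      · exact le_rfl
    · simp only [hgood, if_neg h]
      rcases hfin2 x with rfl | rfl
      · exact le_rfl
      · exact le_of_not_ge h
  have hmx : lam i + (hherm i).eigenvalues (good i) = 1 := by
    rw [hlam_bad i]
    by_cases h : (hherm i).eigenvalues 0 ≤ (hherm i).eigenvalues 1
    · simp only [hgood, hbad, if_pos h]; exact hsum_ev
    · simp only [hgood, hbad, if_neg h]; rw [add_comm]; exact hsum_ev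
  -- ζ and s
  set ζ : Fin 2 → ℂ := fun a =>
    ∑ f ∈ Finset.univ.filter (fun f : Fin n → Fin 2 => f i = a),
      (∏ k ∈ Finset.univ.erase i, W k (good k) (f k)) * ψ f with hζdef
  set s : ℝ := ∑ a, Complex.normSq (ζ a) with hs
  have hre : ∑ x, Complex.normSq (∑ a, conj' ((hherm i).eigenvectorBasis x a) * ζ a)
      = s := by
    have := parseval2 (fun x a => (hherm i).eigenvectorBasis x a)
      (fun a b => onb_completeness (hherm i).eigenvectorBasis a b) ζ
    rw [hs]
    exact_mod_cast this
  have claim1 : ∀ x : Fin 2, coeff ψ W (Function.update good i x) = ∑ a, W i x a * ζ a := by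
    intro x
    calc coeff ψ W (Function.update good i x)
        = ∑ f, W i x (f i)
            * ((∏ k ∈ Finset.univ.erase i, W k (good k) (f k)) * ψ f) := by
          unfold coeff
          refine Finset.sum_congr rfl fun f _ => ?_
          rw [← Finset.mul_prod_erase Finset.univ _ (Finset.mem_univ i),
            Function.update_self, mul_assoc]
          congr 2
          refine Finset.prod_congr rfl fun k hk => ?_
          rw [Function.update_of_ne (Finset.mem_erase.mp hk).1]
      _ = ∑ a, ∑ f ∈ Finset.univ.filter (fun f : Fin n → Fin 2 => f i = a),
            W i x (f i) * ((∏ k ∈ Finset.univ.erase i, W k (good k) (f k)) * ψ f) :=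
          sum_split_at i _
      _ = ∑ a, W i x a * ζ a := by
          refine Finset.sum_congr rfl fun a _ => ?_
          rw [hζdef, Finset.mul_sum]
          refine Finset.sum_congr rfl fun f hf => ?_
          rw [(Finset.mem_filter.mp hf).2]
  have claim2 : Complex.normSq (coeff ψ W (Function.update good i 0))
      + Complex.normSq (coeff ψ W (Function.update good i 1)) = s := by
    calc Complex.normSq (coeff ψ W (Function.update good i 0))
        + Complex.normSq (coeff ψ W (Function.update good i 1))
        = ∑ x, Complex.normSq (coeff ψ W (Function.update good i x)) :=
          (Fin.sum_univ_two
            (fun x => Complex.normSq (coeff ψ W (Function.update good i x)))).symm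
      _ = ∑ x, Complex.normSq (∑ a, conj' ((hherm i).eigenvectorBasis x a) * ζ a) := by
          refine Finset.sum_congr rfl fun x _ => ?_
          rw [claim1 x]
      _ = s := hre
  -- Rayleigh bound
  have claim3 : s * s ≤ (hherm i).eigenvalues (good i) * s := by
    set V' : Fin n → Fin 2 → Fin 2 → ℂ :=
      Function.update W i (fun _ a => conj' (ζ a)) with hV'
    have hcomp' : ∀ k, k ≠ i → ∀ a b,
        ∑ y, V' k y a * conj' (V' k y b) = if a = b then 1 else 0 := by
      intro k hk a b
      rw [hV', Function.update_of_ne hk]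
      exact hcompW k a b
    have hquad : (↑(∑ g ∈ Finset.univ.filter (fun g : Fin n → Fin 2 => g i = 0),
        Complex.normSq (coeff ψ V' g)) : ℂ)
        = ∑ x, ((hherm i).eigenvalues x : ℂ)
            * (Complex.normSq (∑ a, conj' ((hherm i).eigenvectorBasis x a) * ζ a) : ℂ) := by
      calc (↑(∑ g ∈ Finset.univ.filter (fun g : Fin n → Fin 2 => g i = 0),
          Complex.normSq (coeff ψ V' g)) : ℂ)
          = ∑ g ∈ Finset.univ.filter (fun g : Fin n → Fin 2 => g i = 0),
              (Complex.normSq (coeff ψ V' g) : ℂ) := by push_cast; rfl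
        _ = ∑ a, ∑ b, V' i 0 a * conj' (V' i 0 b) * qubitMargin n ψ i a b :=
            key ψ V' i 0 hcomp'
        _ = ∑ a, ∑ b, conj' (ζ a) * conj' (conj' (ζ b)) * qubitMargin n ψ i a b := by
            refine Finset.sum_congr rfl fun a _ => Finset.sum_congr rfl fun b _ => ?_
            rw [hV']
            simp [Function.update_self]
        _ = _ := quad_eval _ (hherm i) ζ
    have hreal : ∑ g ∈ Finset.univ.filter (fun g : Fin n → Fin 2 => g i = 0),
        Complex.normSq (coeff ψ V' g)
        = ∑ x, (hherm i).eigenvalues x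
            * Complex.normSq (∑ a, conj' ((hherm i).eigenvectorBasis x a) * ζ a) := by
      exact_mod_cast hquad
    have hcoeff : coeff ψ V' (Function.update good i 0) = (s : ℂ) := by
      calc coeff ψ V' (Function.update good i 0)
          = ∑ f, conj' (ζ (f i))
              * ((∏ k ∈ Finset.univ.erase i, W k (good k) (f k)) * ψ f) := by
            unfold coeff
            refine Finset.sum_congr rfl fun f _ => ?_
            rw [← Finset.mul_prod_erase Finset.univ _ (Finset.mem_univ i)]
            rw [show Function.update good i 0 i = 0 from Function.update_self i 0 good]
            rw [hV']
            rw [show Function.update W i (fun _ a => conj' (ζ a)) i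
              = fun _ a => conj' (ζ a) from Function.update_self i _ W]
            rw [mul_assoc]
            congr 2
            refine Finset.prod_congr rfl fun k hk => ?_
            have hk' := (Finset.mem_erase.mp hk).1
            rw [Function.update_of_ne hk', Function.update_of_ne hk']
        _ = ∑ a, ∑ f ∈ Finset.univ.filter (fun f : Fin n → Fin 2 => f i = a),
              conj' (ζ (f i))
                * ((∏ k ∈ Finset.univ.erase i, W k (good k) (f k)) * ψ f) :=
            sum_split_at i _
        _ = ∑ a, conj' (ζ a) * ζ a := by
            refine Finset.sum_congr rfl fun a _ => ?_
            rw [hζdef, Finset.mul_sum]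
            refine Finset.sum_congr rfl fun f hf => ?_
            rw [(Finset.mem_filter.mp hf).2]
        _ = ∑ a, (Complex.normSq (ζ a) : ℂ) := by
            refine Finset.sum_congr rfl fun a _ => ?_
            rw [mul_comm, Complex.mul_conj]
        _ = (s : ℂ) := by rw [hs]; push_cast; rfl
    have hmem : Function.update good i 0 ∈
        Finset.univ.filter (fun g : Fin n → Fin 2 => g i = 0) := by
      simp [Function.update_self]
    have hlb : Complex.normSq (coeff ψ V' (Function.update good i 0))
        ≤ ∑ g ∈ Finset.univ.filter (fun g : Fin n → Fin 2 => g i = 0),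
            Complex.normSq (coeff ψ V' g) :=
      Finset.single_le_sum (fun g _ => Complex.normSq_nonneg _) hmem
    have hub : ∑ x, (hherm i).eigenvalues x
        * Complex.normSq (∑ a, conj' ((hherm i).eigenvectorBasis x a) * ζ a)
        ≤ (hherm i).eigenvalues (good i) * s := by
      calc ∑ x, (hherm i).eigenvalues x
          * Complex.normSq (∑ a, conj' ((hherm i).eigenvectorBasis x a) * ζ a)
          ≤ ∑ x, (hherm i).eigenvalues (good i)
              * Complex.normSq (∑ a, conj' ((hherm i).eigenvectorBasis x a) * ζ a) :=
            Finset.sum_le_sum fun x _ =>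
              mul_le_mul_of_nonneg_right (hle_good i x) (Complex.normSq_nonneg _)
        _ = (hherm i).eigenvalues (good i)
            * ∑ x, Complex.normSq (∑ a, conj' ((hherm i).eigenvectorBasis x a) * ζ a) :=
            (Finset.mul_sum _ _ _).symm
        _ = (hherm i).eigenvalues (good i) * s := by rw [hre]
    have hsq : Complex.normSq (coeff ψ V' (Function.update good i 0)) = s * s := by
      rw [hcoeff, Complex.normSq_ofReal]
    linarith [hlb, hub, hreal, hsq]
  -- total sum is 1
  have htot : ∑ g : Fin n → Fin 2, Complex.normSq (coeff ψ W g) = 1 := by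
    rw [sum_split_at i (fun g => Complex.normSq (coeff ψ W g))]
    rw [Fin.sum_univ_two, hS i 0, hS i 1]
    exact hsum_ev
  -- the set G
  have hne : Function.update good i 0 ≠ Function.update good i 1 := by
    intro h
    have := congrFun h i
    simp [Function.update_self] at this
  have hG : Finset.univ.filter (fun g : Fin n → Fin 2 => ∀ j, j ≠ i → g j = good j)
      = {Function.update good i 0, Function.update good i 1} := by
    ext g
    simp only [Finset.mem_filter, Finset.mem_univ, true_and, Finset.mem_insert,
      Finset.mem_singleton]
    constructor
    · intro hg
      have hgu : ∀ x : Fin 2, g i = x → g = Function.update good i x := by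
        intro x hx
        funext k
        by_cases hk : k = i
        · subst hk; rw [Function.update_self]; exact hx
        · rw [Function.update_of_ne hk]; exact hg k hk
      rcases hfin2 (g i) with h | h
      · exact Or.inl (hgu 0 h)
      · exact Or.inr (hgu 1 h)
    · rintro (rfl | rfl) <;> intro k hk <;> rw [Function.update_of_ne hk]
  have hGs : ∑ g ∈ Finset.univ.filter
      (fun g : Fin n → Fin 2 => ∀ j, j ≠ i → g j = good j),
      Complex.normSq (coeff ψ W g) = s := by
    rw [hG, Finset.sum_pair hne]
    exact claim2
  -- union bound on the complement
  set Gc : Finset (Fin n → Fin 2) := Finset.univ.filter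
      (fun g : Fin n → Fin 2 => ¬ ∀ j, j ≠ i → g j = good j) with hGc
  have hcompl : ∑ g ∈ Gc,
      Complex.normSq (coeff ψ W g) ≤ ∑ j ∈ Finset.univ.erase i, lam j := by
    calc ∑ g ∈ Gc, Complex.normSq (coeff ψ W g)
        ≤ ∑ g ∈ Gc,
            ∑ j ∈ Finset.univ.erase i,
              (if g j = bad j then Complex.normSq (coeff ψ W g) else 0) := by
          refine Finset.sum_le_sum fun g hg => ?_
          rw [hGc] at hg
          simp only [Finset.mem_filter, Finset.mem_univ, true_and] at hg
          push_neg at hg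
          obtain ⟨j0, hj0ne, hj0⟩ := hg
          have hj0bad : g j0 = bad j0 := hgb j0 (g j0) hj0
          have hmem : j0 ∈ Finset.univ.erase i :=
            Finset.mem_erase.mpr ⟨hj0ne, Finset.mem_univ _⟩
          calc Complex.normSq (coeff ψ W g)
              = (if g j0 = bad j0 then Complex.normSq (coeff ψ W g) else 0) := by
                rw [if_pos hj0bad]
            _ ≤ ∑ j ∈ Finset.univ.erase i,
                (if g j = bad j then Complex.normSq (coeff ψ W g) else 0) :=
                Finset.single_le_sum (f := fun j =>
                  if g j = bad j then Complex.normSq (coeff ψ W g) else 0)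
                  (fun j _ => by
                    by_cases h : g j = bad j <;>
                      simp [h, Complex.normSq_nonneg]) hmem
      _ = ∑ j ∈ Finset.univ.erase i, ∑ g ∈ Gc,
            (if g j = bad j then Complex.normSq (coeff ψ W g) else 0) :=
          Finset.sum_comm
      _ ≤ ∑ j ∈ Finset.univ.erase i, ∑ g : Fin n → Fin 2,
            (if g j = bad j then Complex.normSq (coeff ψ W g) else 0) := by
          refine Finset.sum_le_sum fun j _ => ?_
          refine Finset.sum_le_sum_of_subset_of_nonneg (Finset.filter_subset _ _) ?_
          intro g _ _
          split
          · exact Complex.normSq_nonneg _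
          · exact le_rfl
      _ = ∑ j ∈ Finset.univ.erase i, ∑ g ∈ Finset.univ.filter
            (fun g : Fin n → Fin 2 => g j = bad j), Complex.normSq (coeff ψ W g) := by
          refine Finset.sum_congr rfl fun j _ => ?_
          rw [Finset.sum_filter]
      _ = ∑ j ∈ Finset.univ.erase i, lam j := by
          refine Finset.sum_congr rfl fun j _ => ?_
          rw [hS j (bad j), ← hlam_bad j]
  -- assemble
  have hsplit : s + ∑ g ∈ Gc, Complex.normSq (coeff ψ W g) = 1 := by
    rw [← hGs, hGc, Finset.sum_filter_add_sum_filter_not]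
    exact htot
  have hs_nonneg : 0 ≤ s := by
    rw [hs]
    exact Finset.sum_nonneg fun a _ => Complex.normSq_nonneg _
  have hmx_nonneg : 0 ≤ (hherm i).eigenvalues (good i) := by
    have h1 : lam i ≤ (hherm i).eigenvalues (good i) := by
      rw [hlam_bad i]; exact hle_good i (bad i)
    linarith [hmx]
  have hsmx : s ≤ (hherm i).eigenvalues (good i) := by
    rcases eq_or_lt_of_le hs_nonneg with h | h
    · rw [← h]; exact hmx_nonneg
    · exact le_of_mul_le_mul_right claim3 h
  linarith [hsplit, hcompl, hmx, hsmx]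
end
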